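/- Let s > n, let h : ℝⁿ → ℝ be continuous nonnegative with h·λ a probability measure of finite first moment. Then inf { (∫ f h dλ) · (∫ f^{-s} dλ)^{1/s} : f ∈ C_lin, f > 0 } = (∫ h^{s/(s+1)} dλ)^{(s+1)/s}, i.e. the infimum of ⟨f, hλ⟩ / ‖f‖_{-s} over C_lin equals ‖h‖_{s/(s+1)}. -/

import Mathlib

open MeasureTheory Real
open scoped ENNReal NNReal

lemma real_rpow_add_le {p a b : ℝ} (hp : 0 ≤ p) (hp1 : p ≤ 1) (ha : 0 ≤ a) (hb : 0 ≤ b) :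
    (a + b) ^ p ≤ a ^ p + b ^ p := by
  lift a to NNReal using ha
  lift b to NNReal using hb
  have := NNReal.rpow_add_le_add_rpow a b hp hp1
  exact_mod_cast this

lemma aux_holder {α : Type*} [MeasurableSpace α] (μ : Measure α) {s : ℝ} (hs : 0 < s)
    {u v : α → ℝ≥0∞} (hu : AEMeasurable u μ) (hv : AEMeasurable v μ) :
    ∫⁻ x, (u x) ^ (s/(s+1)) * (v x) ^ (1/(s+1)) ∂μ ≤
      (∫⁻ x, u x ∂μ) ^ (s/(s+1)) * (∫⁻ x, v x ∂μ) ^ (1/(s+1)) := by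
  have hs1 : (0:ℝ) < s + 1 := by linarith
  have hconj : ((s+1)/s).HolderConjugate (s+1) :=
    Real.holderConjugate_iff.mpr ⟨by rw [lt_div_iff₀ hs]; linarith,
      by rw [inv_div, ← one_div, ← add_div, div_self hs1.ne']⟩
  have hmain := ENNReal.lintegral_mul_le_Lp_mul_Lq μ hconj
    (hu.pow_const (s/(s+1))) (hv.pow_const (1/(s+1)))
  have e1 : ∀ x : ℝ≥0∞, (x ^ (s/(s+1))) ^ ((s+1)/s) = x := by
    intro x
    rw [← ENNReal.rpow_mul]
    rw [show s/(s+1) * ((s+1)/s) = 1 by field_simp]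
    exact ENNReal.rpow_one x
  have e2 : ∀ x : ℝ≥0∞, (x ^ (1/(s+1))) ^ (s+1) = x := by
    intro x
    rw [← ENNReal.rpow_mul]
    rw [show 1/(s+1) * (s+1) = 1 by field_simp]
    exact ENNReal.rpow_one x
  simp only [Pi.mul_apply, e1, e2] at hmain
  rw [show 1/((s+1)/s) = s/(s+1) by rw [one_div_div], one_div (s+1)] at hmain
  simpa [one_div] using hmain

lemma rpow_holder_real {α : Type*} [MeasurableSpace α] {μ : Measure α} {s : ℝ} (hs : 0 < s)
    {u v w : α → ℝ}
    (hu : Integrable u μ) (hv : Integrable v μ)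
    (hu0 : ∀ x, 0 ≤ u x) (hv0 : ∀ x, 0 ≤ v x)
    (hw : ∀ x, w x = u x ^ (s/(s+1)) * v x ^ (1/(s+1)))
    (hwm : AEStronglyMeasurable w μ) :
    Integrable w μ ∧
      ∫ x, w x ∂μ ≤ (∫ x, u x ∂μ) ^ (s/(s+1)) * (∫ x, v x ∂μ) ^ (1/(s+1)) := by
  have hs1 : (0:ℝ) < s + 1 := by linarith
  have hp0 : (0:ℝ) ≤ s/(s+1) := by positivity
  have hq0 : (0:ℝ) ≤ 1/(s+1) := by positivity
  have hw0 : ∀ x, 0 ≤ w x := fun x => by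
    rw [hw x]; exact mul_nonneg (rpow_nonneg (hu0 x) _) (rpow_nonneg (hv0 x) _)
  have hUm : AEMeasurable (fun x => ENNReal.ofReal (u x)) μ :=
    ENNReal.measurable_ofReal.comp_aemeasurable hu.aemeasurable
  have hVm : AEMeasurable (fun x => ENNReal.ofReal (v x)) μ :=
    ENNReal.measurable_ofReal.comp_aemeasurable hv.aemeasurable
  have key := aux_holder μ hs hUm hVm
  have hpt : ∀ x, (ENNReal.ofReal (u x)) ^ (s/(s+1)) * (ENNReal.ofReal (v x)) ^ (1/(s+1))
      = ENNReal.ofReal (w x) := by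
    intro x
    rw [hw x, ENNReal.ofReal_mul (rpow_nonneg (hu0 x) _),
      ← ENNReal.ofReal_rpow_of_nonneg (hu0 x) hp0, ← ENNReal.ofReal_rpow_of_nonneg (hv0 x) hq0]
  rw [lintegral_congr (fun x => hpt x)] at key
  have hA : (0:ℝ) ≤ ∫ x, u x ∂μ := integral_nonneg hu0
  have hB : (0:ℝ) ≤ ∫ x, v x ∂μ := integral_nonneg hv0
  rw [← ofReal_integral_eq_lintegral_ofReal hu (ae_of_all _ hu0),
      ← ofReal_integral_eq_lintegral_ofReal hv (ae_of_all _ hv0),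
      ENNReal.ofReal_rpow_of_nonneg hA hp0,
      ENNReal.ofReal_rpow_of_nonneg hB hq0,
      ← ENNReal.ofReal_mul (rpow_nonneg hA _)] at key
  have hfin : ∫⁻ x, ENNReal.ofReal (w x) ∂μ < ⊤ := lt_of_le_of_lt key ENNReal.ofReal_lt_top
  have hwint : Integrable w μ := ⟨hwm, (hasFiniteIntegral_iff_ofReal (ae_of_all _ hw0)).2 hfin⟩
  refine ⟨hwint, ?_⟩
  rw [integral_eq_lintegral_of_nonneg_ae (ae_of_all _ hw0) hwm]
  calc (∫⁻ x, ENNReal.ofReal (w x) ∂μ).toReal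
      ≤ (ENNReal.ofReal ((∫ x, u x ∂μ) ^ (s/(s+1)) * (∫ x, v x ∂μ) ^ (1/(s+1)))).toReal :=
        ENNReal.toReal_mono ENNReal.ofReal_ne_top key
    _ = _ := ENNReal.toReal_ofReal
        (mul_nonneg (rpow_nonneg hA _) (rpow_nonneg hB _))


/-- For `s > n` and `h` continuous nonnegative with `h·λ` a probability measure of finite
first moment, the infimum of `(∫ f h dλ) · (∫ f^{-s} dλ)^{1/s}` over positive continuous
`f` of at most linear growth equals `(∫ h^{s/(s+1)} dλ)^{(s+1)/s}`. -/
theorem stmt13 {n : ℕ} (s : ℝ) (hs : (n : ℝ) < s)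
    (h : EuclideanSpace ℝ (Fin n) → ℝ)
    (hc : Continuous h) (hnn : ∀ x, 0 ≤ h x)
    (hint : Integrable h) (hprob : ∫ x, h x = 1)
    (hmom : Integrable fun x => ‖x‖ * h x) :
    IsGLB
      {v : ℝ | ∃ f : EuclideanSpace ℝ (Fin n) → ℝ, Continuous f ∧
        (∀ x, 0 < f x) ∧ (∃ C : ℝ, ∀ x, f x ≤ C * (1 + ‖x‖)) ∧
        (Integrable fun x => f x ^ (-s)) ∧
        v = (∫ x, f x * h x) * (∫ x, f x ^ (-s)) ^ (1 / s)}
      ((∫ x, h x ^ (s / (s + 1))) ^ ((s + 1) / s)) := by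
  have hs0 : (0:ℝ) < s := lt_of_le_of_lt (Nat.cast_nonneg n) hs
  have hs1 : (0:ℝ) < s + 1 := by linarith
  have hq0 : (0:ℝ) < s / (s + 1) := by positivity
  have hq1 : s / (s + 1) ≤ 1 := by rw [div_le_one hs1]; linarith
  -- integrability of (1+‖x‖)^(-s)
  have hJint : Integrable (fun x : EuclideanSpace ℝ (Fin n) => (1 + ‖x‖) ^ (-s)) := by
    apply integrable_one_add_norm
    simpa [finrank_euclideanSpace_fin] using hs
  -- integrability of (1+‖x‖) * h
  have hUh : Integrable (fun x : EuclideanSpace ℝ (Fin n) => (1 + ‖x‖) * h x) := by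
    have := hint.add hmom
    exact this.congr (ae_of_all _ fun x => by simp [add_mul])
  -- continuity and integrability of h ^ (s/(s+1))
  have hcp : Continuous (fun x : EuclideanSpace ℝ (Fin n) => h x ^ (s / (s + 1))) :=
    hc.rpow_const fun x => Or.inr hq0.le
  have hkey_pt : ∀ x : EuclideanSpace ℝ (Fin n), h x ^ (s / (s + 1)) =
      ((1 + ‖x‖) * h x) ^ (s / (s + 1)) * ((1 + ‖x‖) ^ (-s)) ^ (1 / (s + 1)) := by
    intro x
    have h1 : (0:ℝ) < 1 + ‖x‖ := by positivity
    rw [Real.mul_rpow h1.le (hnn x), ← Real.rpow_mul h1.le,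
      show -s * (1 / (s + 1)) = -(s / (s + 1)) by ring,
      mul_comm ((1 + ‖x‖) ^ (s / (s + 1))) (h x ^ (s / (s + 1))), mul_assoc,
      ← Real.rpow_add h1, show s / (s + 1) + -(s / (s + 1)) = 0 by ring,
      Real.rpow_zero, mul_one]
  obtain ⟨hIp, -⟩ := rpow_holder_real hs0 hUh hJint
    (fun x => mul_nonneg (by positivity) (hnn x))
    (fun x => Real.rpow_nonneg (by positivity) _) hkey_pt hcp.aestronglyMeasurable
  have hIa : 0 ≤ ∫ x, h x ^ (s / (s + 1)) :=
    integral_nonneg fun x => Real.rpow_nonneg (hnn x) _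
  constructor
  · -- lower bound
    rintro v ⟨f, hfc, hfpos, ⟨C, hC⟩, hfint, rfl⟩
    have hfh_int : Integrable (fun x => f x * h x) := by
      refine Integrable.mono' (hUh.const_mul C) ((hfc.mul hc).aestronglyMeasurable)
        (ae_of_all _ fun x => ?_)
      rw [Real.norm_eq_abs, abs_of_nonneg (mul_nonneg (hfpos x).le (hnn x))]
      calc f x * h x ≤ (C * (1 + ‖x‖)) * h x := mul_le_mul_of_nonneg_right (hC x) (hnn x)
        _ = C * ((1 + ‖x‖) * h x) := by ring
    have hpt : ∀ x, h x ^ (s / (s + 1)) =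
        (f x * h x) ^ (s / (s + 1)) * (f x ^ (-s)) ^ (1 / (s + 1)) := by
      intro x
      have hfx := hfpos x
      rw [Real.mul_rpow hfx.le (hnn x), ← Real.rpow_mul hfx.le,
        show -s * (1 / (s + 1)) = -(s / (s + 1)) by ring,
        mul_comm (f x ^ (s / (s + 1))) (h x ^ (s / (s + 1))), mul_assoc,
        ← Real.rpow_add hfx, show s / (s + 1) + -(s / (s + 1)) = 0 by ring,
        Real.rpow_zero, mul_one]
    obtain ⟨-, hineq⟩ := rpow_holder_real hs0 hfh_int hfint
      (fun x => mul_nonneg (hfpos x).le (hnn x))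
      (fun x => Real.rpow_nonneg (hfpos x).le _) hpt hcp.aestronglyMeasurable
    have hA : 0 ≤ ∫ x, f x * h x := integral_nonneg fun x => mul_nonneg (hfpos x).le (hnn x)
    have hB : 0 ≤ ∫ x, f x ^ (-s) := integral_nonneg fun x => Real.rpow_nonneg (hfpos x).le _
    have hfinal := Real.rpow_le_rpow hIa hineq (by positivity : (0:ℝ) ≤ (s + 1) / s)
    calc (∫ x, h x ^ (s / (s + 1))) ^ ((s + 1) / s)
        ≤ ((∫ x, f x * h x) ^ (s / (s + 1)) * (∫ x, f x ^ (-s)) ^ (1 / (s + 1))) ^ ((s + 1) / s) :=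
          hfinal
      _ = (∫ x, f x * h x) * (∫ x, f x ^ (-s)) ^ (1 / s) := by
          rw [Real.mul_rpow (Real.rpow_nonneg hA _) (Real.rpow_nonneg hB _),
            ← Real.rpow_mul hA, ← Real.rpow_mul hB,
            show s / (s + 1) * ((s + 1) / s) = 1 by field_simp,
            show 1 / (s + 1) * ((s + 1) / s) = 1 / s by field_simp,
            Real.rpow_one]
  · -- greatest lower bound
    intro b hb
    have hJ0 : 0 ≤ ∫ x : EuclideanSpace ℝ (Fin n), (1 + ‖x‖) ^ (-s) :=
      integral_nonneg fun x => Real.rpow_nonneg (by positivity) _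
    have key : ∀ k : ℕ, b ≤ (∫ x, h x ^ (s / (s + 1))) *
        ((∫ x, h x ^ (s / (s + 1))) +
          ((k : ℝ) + 1) ^ (-s) * ∫ x : EuclideanSpace ℝ (Fin n), (1 + ‖x‖) ^ (-s)) ^ (1 / s) := by
      intro k
      have hcpos : (0:ℝ) < (k : ℝ) + 1 := by positivity
      set c : ℝ := (k : ℝ) + 1 with hcdef
      set f := fun x : EuclideanSpace ℝ (Fin n) =>
        (h x + (c * (1 + ‖x‖)) ^ (-(s + 1))) ^ (-(1 / (s + 1))) with hfdef
      have hbase : ∀ x, 0 < h x + (c * (1 + ‖x‖)) ^ (-(s + 1)) := fun x =>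
        add_pos_of_nonneg_of_pos (hnn x) (Real.rpow_pos_of_pos (by positivity) _)
      have hfpos : ∀ x, 0 < f x := fun x => Real.rpow_pos_of_pos (hbase x) _
      have hfc : Continuous f := by
        apply Continuous.rpow_const
        · exact hc.add ((continuous_const.mul (continuous_const.add continuous_norm)).rpow_const
            fun x => Or.inl (mul_pos hcpos (add_pos_of_pos_of_nonneg one_pos (norm_nonneg x))).ne')
        · exact fun x => Or.inl (hbase x).ne'
      have hgrow : ∀ x, f x ≤ c * (1 + ‖x‖) := by
        intro x
        have h1 : (0:ℝ) < c * (1 + ‖x‖) := by positivity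
        have hle : (c * (1 + ‖x‖)) ^ (-(s + 1)) ≤ h x + (c * (1 + ‖x‖)) ^ (-(s + 1)) :=
          le_add_of_nonneg_left (hnn x)
        have h2 := Real.rpow_le_rpow_of_nonpos (Real.rpow_pos_of_pos h1 (-(s + 1))) hle
          (neg_nonpos.2 (by positivity : (0:ℝ) ≤ 1 / (s + 1)))
        calc f x ≤ ((c * (1 + ‖x‖)) ^ (-(s + 1))) ^ (-(1 / (s + 1))) := h2
          _ = c * (1 + ‖x‖) := by
            rw [← Real.rpow_mul h1.le, show -(s + 1) * -(1 / (s + 1)) = 1 by field_simp,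
              Real.rpow_one]
      have hfneg : ∀ x, f x ^ (-s) = (h x + (c * (1 + ‖x‖)) ^ (-(s + 1))) ^ (s / (s + 1)) := by
        intro x
        rw [hfdef]
        rw [← Real.rpow_mul (hbase x).le, show -(1 / (s + 1)) * -s = s / (s + 1) by ring]
      have hbound : ∀ x, f x ^ (-s) ≤ h x ^ (s / (s + 1)) + c ^ (-s) * (1 + ‖x‖) ^ (-s) := by
        intro x
        rw [hfneg x]
        refine (real_rpow_add_le hq0.le hq1 (hnn x)
          (Real.rpow_pos_of_pos (by positivity) _).le).trans ?_
        have : ((c * (1 + ‖x‖)) ^ (-(s + 1))) ^ (s / (s + 1)) = c ^ (-s) * (1 + ‖x‖) ^ (-s) := by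
          rw [← Real.rpow_mul (by positivity : (0:ℝ) ≤ c * (1 + ‖x‖)),
            show -(s + 1) * (s / (s + 1)) = -s by field_simp,
            Real.mul_rpow hcpos.le (by positivity : (0:ℝ) ≤ 1 + ‖x‖)]
        rw [this]
      have hfs_int : Integrable (fun x => f x ^ (-s)) := by
        refine Integrable.mono' (hIp.add (hJint.const_mul (c ^ (-s))))
          ((hfc.rpow_const fun x => Or.inl (hfpos x).ne').aestronglyMeasurable)
          (ae_of_all _ fun x => ?_)
        rw [Real.norm_eq_abs, abs_of_nonneg (Real.rpow_nonneg (hfpos x).le _)]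
        exact hbound x
      have hfh_int : Integrable (fun x => f x * h x) := by
        refine Integrable.mono' (hUh.const_mul c) ((hfc.mul hc).aestronglyMeasurable)
          (ae_of_all _ fun x => ?_)
        rw [Real.norm_eq_abs, abs_of_nonneg (mul_nonneg (hfpos x).le (hnn x))]
        calc f x * h x ≤ (c * (1 + ‖x‖)) * h x := mul_le_mul_of_nonneg_right (hgrow x) (hnn x)
          _ = c * ((1 + ‖x‖) * h x) := by ring
      have hfh_le : ∫ x, f x * h x ≤ ∫ x, h x ^ (s / (s + 1)) := by
        refine integral_mono hfh_int hIp fun x => ?_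
        rcases (hnn x).eq_or_lt with h0 | h0
        · rw [← h0, mul_zero]
          exact Real.rpow_nonneg le_rfl _
        · have hle : f x ≤ h x ^ (-(1 / (s + 1))) :=
            Real.rpow_le_rpow_of_nonpos h0 (le_add_of_nonneg_right
              (Real.rpow_pos_of_pos (by positivity) _).le)
              (neg_nonpos.2 (by positivity : (0:ℝ) ≤ 1 / (s + 1)))
          calc f x * h x ≤ h x ^ (-(1 / (s + 1))) * h x :=
                mul_le_mul_of_nonneg_right hle (hnn x)
            _ = h x ^ (s / (s + 1)) := by
                have e := Real.rpow_add h0 (-(1 / (s + 1))) 1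
                rw [Real.rpow_one] at e
                rw [← e, show -(1 / (s + 1)) + 1 = s / (s + 1) by field_simp; ring]
      have hfs_le : ∫ x, f x ^ (-s) ≤ (∫ x, h x ^ (s / (s + 1))) +
          c ^ (-s) * ∫ x : EuclideanSpace ℝ (Fin n), (1 + ‖x‖) ^ (-s) := by
        have hadd := integral_add hIp (hJint.const_mul (c ^ (-s)) (f := fun x : EuclideanSpace ℝ (Fin n) => (1 + ‖x‖) ^ (-s)))
        rw [integral_const_mul] at hadd
        exact (integral_mono hfs_int (hIp.add (hJint.const_mul _)) hbound).trans_eq hadd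
      have hmem : (∫ x, f x * h x) * (∫ x, f x ^ (-s)) ^ (1 / s) ∈
          {v : ℝ | ∃ f : EuclideanSpace ℝ (Fin n) → ℝ, Continuous f ∧
            (∀ x, 0 < f x) ∧ (∃ C : ℝ, ∀ x, f x ≤ C * (1 + ‖x‖)) ∧
            (Integrable fun x => f x ^ (-s)) ∧
            v = (∫ x, f x * h x) * (∫ x, f x ^ (-s)) ^ (1 / s)} :=
        ⟨f, hfc, hfpos, ⟨c, hgrow⟩, hfs_int, rfl⟩
      refine (hb hmem).trans ?_
      have h2 : 0 ≤ ∫ x, f x ^ (-s) := integral_nonneg fun x => Real.rpow_nonneg (hfpos x).le _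
      exact mul_le_mul hfh_le (Real.rpow_le_rpow h2 hfs_le (by positivity))
        (Real.rpow_nonneg h2 _) hIa
    -- take the limit k → ∞
    have heps : Filter.Tendsto (fun k : ℕ => ((k : ℝ) + 1) ^ (-s)) Filter.atTop (nhds 0) :=
      (tendsto_rpow_neg_atTop hs0).comp
        (Filter.tendsto_atTop_add_const_right _ 1 tendsto_natCast_atTop_atTop)
    have htend : Filter.Tendsto (fun k : ℕ => (∫ x, h x ^ (s / (s + 1))) *
        ((∫ x, h x ^ (s / (s + 1))) +
          ((k : ℝ) + 1) ^ (-s) * ∫ x : EuclideanSpace ℝ (Fin n), (1 + ‖x‖) ^ (-s)) ^ (1 / s))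
        Filter.atTop
        (nhds ((∫ x, h x ^ (s / (s + 1))) * (∫ x, h x ^ (s / (s + 1))) ^ (1 / s))) := by
      have h1 : Filter.Tendsto (fun k : ℕ => (∫ x, h x ^ (s / (s + 1))) +
          ((k : ℝ) + 1) ^ (-s) * ∫ x : EuclideanSpace ℝ (Fin n), (1 + ‖x‖) ^ (-s))
          Filter.atTop (nhds ((∫ x, h x ^ (s / (s + 1))) + 0)) := by
        exact tendsto_const_nhds.add (by simpa using heps.mul_const _)
      rw [add_zero] at h1
      have h2 : ContinuousAt (fun y : ℝ => y ^ (1 / s)) (∫ x, h x ^ (s / (s + 1))) :=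
        Real.continuousAt_rpow_const _ _ (Or.inr (by positivity))
      exact (h2.tendsto.comp h1).const_mul _
    have hfin : b ≤ (∫ x, h x ^ (s / (s + 1))) * (∫ x, h x ^ (s / (s + 1))) ^ (1 / s) :=
      ge_of_tendsto' htend key
    rcases hIa.eq_or_lt with h0 | h0
    · rw [← h0, Real.zero_rpow (by positivity : (s + 1) / s ≠ 0)]
      rw [← h0, zero_mul] at hfin
      exact hfin
    · rwa [show (∫ x, h x ^ (s / (s + 1))) * (∫ x, h x ^ (s / (s + 1))) ^ (1 / s) =
        (∫ x, h x ^ (s / (s + 1))) ^ ((s + 1) / s) by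
          rw [show (s + 1) / s = 1 + 1 / s by field_simp, Real.rpow_add h0, Real.rpow_one]] at hfin
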